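/- Let n ≥ 1 and p, q be integers with n ≤ min{p, q}. The Vandermonde determinant Δ(x) = ∏_{1 ≤ i < j ≤ n} (x_i − x_j) is an eigenfunction of the operator J = ∑_{i=1}^n [2 x_i(1 − x_i) ∂_i² + 2((p − n + 1) − (p + q − 2n + 2) x_i) ∂_i] on (0,1)^n, with J Δ = −(n(n−1)(3p + 3q − 4n + 2)/3) Δ. -/

import Mathlib

open Finset Function

noncomputable def pd {n : ℕ} (i : Fin n) (f : (Fin n → ℝ) → ℝ) (x : Fin n → ℝ) : ℝ :=
  deriv (fun t => f (Function.update x i t)) (x i)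

noncomputable def vd {n : ℕ} (x : Fin n → ℝ) : ℝ :=
  ∏ i : Fin n, ∏ j ∈ Finset.Ioi i, (x i - x j)

variable {n : ℕ}

def PP (n : ℕ) : Finset (Fin n × Fin n) := Finset.univ.filter (fun p => p.1 < p.2)

def dd (p : Fin n × Fin n) (x : Fin n → ℝ) : ℝ := x p.1 - x p.2

noncomputable def ee (i : Fin n) (p : Fin n × Fin n) : ℝ :=
  (if p.1 = i then (1:ℝ) else 0) - (if p.2 = i then (1:ℝ) else 0)

noncomputable def sg (i j : Fin n) : ℝ := if i < j then 1 else -1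

def pr (i j : Fin n) : Fin n × Fin n := if i < j then (i, j) else (j, i)

lemma vd_eq (x : Fin n → ℝ) : vd x = ∏ p ∈ PP n, dd p x := by
  rw [vd, PP]
  rw [Finset.prod_filter, ← Finset.univ_product_univ, Finset.prod_product]
  exact Finset.prod_congr rfl fun i _ => by
    rw [← Finset.prod_filter]
    exact (Finset.prod_congr (by ext j; simp [Finset.mem_Ioi]) (fun j _ => rfl)).symm

-- key analytic lemma
lemma keyG (S : Finset (Fin n × Fin n)) (x : Fin n → ℝ) (i : Fin n) :
    HasDerivAt (fun t => ∏ p ∈ S, dd p (Function.update x i t))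
      (∑ p ∈ S, ee i p * ∏ q ∈ S.erase p, dd q x) (x i) := by
  have h : ∀ p ∈ S, HasDerivAt (fun t => dd p (Function.update x i t)) (ee i p) (x i) := by
    intro p _
    have : (fun t => dd p (Function.update x i t))
        = fun t => (if p.1 = i then t else x p.1) - (if p.2 = i then t else x p.2) := by
      funext t
      simp only [dd, Function.update]
      aesop
    rw [this, ee]
    by_cases h1 : p.1 = i <;> by_cases h2 : p.2 = i <;> simp [h1, h2] <;>
      first
        | simpa using ((hasDerivAt_id (x i)).sub_const (x p.2))
        | simpa using ((hasDerivAt_const (x i) (x p.1)).sub (hasDerivAt_id (x i)))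
        | exact hasDerivAt_const _ _
        | simpa using ((hasDerivAt_id (x i)).sub (hasDerivAt_id (x i)))
        | exact (hasDerivAt_id' (x i)).const_sub (x p.1)
        | exact (hasDerivAt_id' (x i)).sub_const (x p.2)
  have := HasDerivAt.finset_prod h
  have hupd : Function.update x i (x i) = x := Function.update_eq_self i x
  rw [hupd] at this
  rw [Finset.prod_fn] at this
  refine this.congr_deriv ?_
  exact Finset.sum_congr rfl fun p _ => by rw [smul_eq_mul, mul_comm]
lemma pd_vd (x : Fin n → ℝ) (i : Fin n) :
    pd i vd x = ∑ p ∈ PP n, ee i p * ∏ q ∈ (PP n).erase p, dd q x := by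
  have : (fun t => vd (Function.update x i t))
      = fun t => ∏ p ∈ PP n, dd p (Function.update x i t) := by
    funext t; exact vd_eq _
  rw [pd, this]
  exact (keyG (PP n) x i).deriv

lemma pd_pd_vd (x : Fin n → ℝ) (i : Fin n) :
    pd i (pd i vd) x = ∑ p ∈ PP n, ee i p *
      ∑ q ∈ ((PP n).erase p), ee i q * ∏ r ∈ (((PP n).erase p).erase q), dd r x := by
  have h1 : (fun t => pd i vd (Function.update x i t))
      = fun t => ∑ p ∈ PP n, ee i p * ∏ q ∈ (PP n).erase p, dd q (Function.update x i t) := by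
    funext t; exact pd_vd _ i
  rw [pd, h1]
  refine HasDerivAt.deriv ?_
  have := HasDerivAt.sum (u := PP n) fun p _ => (keyG ((PP n).erase p) x i).const_mul (ee i p)
  rw [Finset.sum_fn] at this
  exact this
lemma pr_lt {i j : Fin n} (h : i < j) : pr i j = (i, j) := by simp [pr, h]
lemma pr_gt {i j : Fin n} (h : j < i) : pr i j = (j, i) := by
  simp [pr, not_lt.2 (le_of_lt h)]

lemma pr_mem {i j : Fin n} (h : i ≠ j) : pr i j ∈ PP n := by
  rcases lt_or_gt_of_ne h with h' | h'
  · rw [pr_lt h']; simp [PP, h']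
  · rw [pr_gt h']; simp [PP, h']

lemma pr_symm (i j : Fin n) : pr i j = pr j i := by
  rcases lt_trichotomy i j with h | h | h
  · rw [pr_lt h, pr_gt h]
  · simp [h]
  · rw [pr_gt h, pr_lt h]

lemma dd_pr {i j : Fin n} (h : i ≠ j) (x : Fin n → ℝ) :
    dd (pr i j) x = sg i j * (x i - x j) := by
  rcases lt_or_gt_of_ne h with h' | h'
  · rw [pr_lt h']; simp [dd, sg, h']
  · rw [pr_gt h']; simp only [dd, sg, if_neg (not_lt.2 (le_of_lt h'))]; ring

lemma sg_symm {i j : Fin n} (h : i ≠ j) : sg j i = -sg i j := by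
  rcases lt_or_gt_of_ne h with h' | h'
  · simp [sg, h', not_lt.2 (le_of_lt h')]
  · simp [sg, h', not_lt.2 (le_of_lt h')]

lemma pr_inj {i j k : Fin n} (hj : j ≠ i) (hk : k ≠ i) (h : pr i j = pr i k) : j = k := by
  rcases lt_or_gt_of_ne (Ne.symm hj) with h1 | h1 <;>
    rcases lt_or_gt_of_ne (Ne.symm hk) with h2 | h2
  · rw [pr_lt h1, pr_lt h2] at h; exact congrArg Prod.snd h
  · rw [pr_lt h1, pr_gt h2] at h; exact absurd (congrArg Prod.fst h) (ne_of_gt h2)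
  · rw [pr_gt h1, pr_lt h2] at h; exact absurd (congrArg Prod.snd h) (ne_of_lt h2)
  · rw [pr_gt h1, pr_gt h2] at h; exact congrArg Prod.fst h

def ot (i : Fin n) (p : Fin n × Fin n) : Fin n := if p.1 = i then p.2 else p.1

lemma reindex (i : Fin n) (S : Finset (Fin n × Fin n)) (hS : S ⊆ PP n)
    (g : Fin n × Fin n → ℝ) :
    ∑ p ∈ S, ee i p * g p
      = ∑ j ∈ Finset.univ.filter (fun j => pr i j ∈ S), sg i j * g (pr i j) := by
  have hlt : ∀ p ∈ S, p.1 < p.2 := fun p hp => by have := hS hp; simpa [PP] using this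
  have hcase : ∀ p ∈ S, (p.1 = i ∨ p.2 = i) →
      (pr i (ot i p) = p ∧ ot i p ≠ i ∧ sg i (ot i p) = ee i p) := by
    intro p hp hc
    have hne12 : p.1 ≠ p.2 := ne_of_lt (hlt p hp)
    rcases hc with h1 | h2
    · have h2i : p.2 ≠ i := fun hc2 => hne12 (h1.trans hc2.symm)
      have hilt : i < p.2 := h1 ▸ hlt p hp
      have hot : ot i p = p.2 := by simp [ot, h1]
      rw [hot]
      exact ⟨by rw [pr_lt hilt, ← h1], h2i, by simp [sg, hilt, ee, h1, h2i]⟩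
    · have h1i : p.1 ≠ i := fun hc2 => hne12 (hc2.trans h2.symm)
      have hilt : p.1 < i := h2 ▸ hlt p hp
      have hot : ot i p = p.1 := by simp [ot, h1i]
      rw [hot]
      exact ⟨by rw [pr_gt hilt, ← h2], h1i,
        by simp [sg, not_lt.2 (le_of_lt hilt), ee, h1i, h2]⟩
  rw [← Finset.sum_filter_of_ne (p := fun p => p.1 = i ∨ p.2 = i)
    (fun p _ hne => by
      by_contra hc
      rw [not_or] at hc
      exact hne (by simp [ee, hc.1, hc.2]))]
  refine Finset.sum_nbij' (ot i) (pr i) ?_ ?_ ?_ ?_ ?_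
  · intro p hp
    rw [Finset.mem_filter] at hp
    obtain ⟨h, _, _⟩ := hcase p hp.1 hp.2
    simp [Finset.mem_filter, h, hp.1]
  · intro j hj
    rw [Finset.mem_filter] at hj ⊢
    have hji : j ≠ i := by
      rintro rfl
      have := hlt _ hj.2
      simp [pr] at this
    refine ⟨hj.2, ?_⟩
    rcases lt_or_gt_of_ne (Ne.symm hji) with h1 | h1
    · left; rw [pr_lt h1]
    · right; rw [pr_gt h1]
  · intro p hp
    rw [Finset.mem_filter] at hp
    exact (hcase p hp.1 hp.2).1
  · intro j hj
    rw [Finset.mem_filter] at hj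
    have hji : j ≠ i := by
      rintro rfl
      have := hlt _ hj.2
      simp [pr] at this
    rcases lt_or_gt_of_ne (Ne.symm hji) with h1 | h1
    · rw [pr_lt h1]; simp [ot, Ne.symm hji]
    · rw [pr_gt h1]; simp [ot, hji]
  · intro p hp
    rw [Finset.mem_filter] at hp
    obtain ⟨h1, _, h3⟩ := hcase p hp.1 hp.2
    rw [h1, h3]
def E2 (n : ℕ) : Finset (Fin n × Fin n) := Finset.univ.filter fun p => p.1 ≠ p.2

def E3 (n : ℕ) : Finset (Fin n × Fin n × Fin n) :=
  Finset.univ.filter fun t => t.1 ≠ t.2.1 ∧ t.1 ≠ t.2.2 ∧ t.2.1 ≠ t.2.2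

lemma nested2 (f : Fin n → Fin n → ℝ) :
    ∑ p ∈ E2 n, f p.1 p.2 = ∑ i, ∑ j ∈ Finset.univ.erase i, f i j := by
  rw [E2, Finset.sum_filter, ← Finset.univ_product_univ, Finset.sum_product]
  refine Finset.sum_congr rfl fun i _ => ?_
  rw [← Finset.sum_filter]
  refine Finset.sum_congr ?_ fun _ _ => rfl
  ext j
  simp only [Finset.mem_filter, Finset.mem_erase, Finset.mem_univ, and_true, true_and]
  exact ⟨Ne.symm, Ne.symm⟩

lemma nested3 (f : Fin n → Fin n → Fin n → ℝ) :
    ∑ t ∈ E3 n, f t.1 t.2.1 t.2.2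
      = ∑ i, ∑ j ∈ Finset.univ.erase i, ∑ k ∈ (Finset.univ.erase i).erase j, f i j k := by
  rw [E3, Finset.sum_filter, ← Finset.univ_product_univ, Finset.sum_product]
  refine Finset.sum_congr rfl fun i _ => ?_
  rw [← Finset.univ_product_univ, Finset.sum_product]
  have step1 : ∀ j : Fin n,
      (∑ k, if i ≠ j ∧ i ≠ k ∧ j ≠ k then f i j k else 0)
        = if i ≠ j then (∑ k, if i ≠ k ∧ j ≠ k then f i j k else 0) else 0 := by
    intro j
    by_cases h : i ≠ j
    · rw [if_pos h]
      exact Finset.sum_congr rfl fun k _ => by simp [h]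
    · rw [if_neg h]
      refine Finset.sum_eq_zero fun k _ => by simp [h]
  calc (∑ j, ∑ k, if i ≠ j ∧ i ≠ k ∧ j ≠ k then f i j k else 0)
      = ∑ j, if i ≠ j then (∑ k, if i ≠ k ∧ j ≠ k then f i j k else 0) else 0 :=
        Finset.sum_congr rfl fun j _ => step1 j
    _ = ∑ j ∈ Finset.univ.filter (fun j => i ≠ j),
          ∑ k, if i ≠ k ∧ j ≠ k then f i j k else 0 := (Finset.sum_filter _ _).symm
    _ = ∑ j ∈ Finset.univ.erase i, ∑ k ∈ (Finset.univ.erase i).erase j, f i j k := by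
        refine Finset.sum_congr ?_ fun j hj => ?_
        · ext j
          simp only [Finset.mem_filter, Finset.mem_erase, Finset.mem_univ, and_true, true_and]
          exact ⟨Ne.symm, Ne.symm⟩
        · rw [← Finset.sum_filter]
          refine Finset.sum_congr ?_ fun _ _ => rfl
          ext k
          simp only [Finset.mem_filter, Finset.mem_erase, Finset.mem_univ, and_true, true_and]
          constructor
          · rintro ⟨h1, h2⟩; exact ⟨Ne.symm h2, Ne.symm h1⟩
          · rintro ⟨h1, h2⟩; exact ⟨Ne.symm h2, Ne.symm h1⟩

lemma swap2 (g : Fin n × Fin n → ℝ) :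
    ∑ p ∈ E2 n, g p = ∑ p ∈ E2 n, g p.swap := by
  refine Finset.sum_nbij' Prod.swap Prod.swap ?_ ?_ ?_ ?_ ?_ <;>
    intro a ha <;> simp_all [E2, Finset.mem_filter] <;> tauto

def rot3 {n : ℕ} (t : Fin n × Fin n × Fin n) : Fin n × Fin n × Fin n := (t.2.1, t.2.2, t.1)

lemma rot3_mem {t : Fin n × Fin n × Fin n} (h : t ∈ E3 n) : rot3 t ∈ E3 n := by
  simp only [E3, Finset.mem_filter, Finset.mem_univ, true_and, rot3] at h ⊢
  exact ⟨h.2.2, Ne.symm h.1, Ne.symm h.2.1⟩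

lemma sum_rot3 (g : Fin n × Fin n × Fin n → ℝ) :
    ∑ t ∈ E3 n, g t = ∑ t ∈ E3 n, g (rot3 t) := by
  refine Finset.sum_nbij' (fun t => rot3 (rot3 t)) rot3 ?_ ?_ ?_ ?_ ?_
  · exact fun a ha => rot3_mem (rot3_mem ha)
  · exact fun a ha => rot3_mem ha
  · intro a _; rfl
  · intro a _; rfl
  · intro a _; rfl

lemma card_E2 : ((E2 n).card : ℝ) = (n : ℝ) * ((n : ℝ) - 1) := by
  have h : E2 n = (Finset.univ : Finset (Fin n)).offDiag := by
    ext p; simp [E2, Finset.mem_offDiag]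
  rw [h, Finset.offDiag_card]
  have hle : Fintype.card (Fin n) ≤ Fintype.card (Fin n) * Fintype.card (Fin n) := by
    nlinarith [Fintype.card (Fin n)]
  simp only [Finset.card_univ, Fintype.card_fin] at *
  rw [Nat.cast_sub (by nlinarith)]
  push_cast; ring

lemma card_E3 : ((E3 n).card : ℝ) = (n : ℝ) * ((n : ℝ) - 1) * ((n : ℝ) - 2) := by
  have h1 : ((E3 n).card : ℝ) = ∑ t ∈ E3 n, (1 : ℝ) := by
    rw [Finset.sum_const, nsmul_eq_mul, mul_one]
  rw [h1]
  have h2 := nested3 (n := n) (fun _ _ _ => (1 : ℝ))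
  rw [h2]
  have hcard : ∀ i : Fin n, ∀ j ∈ Finset.univ.erase i,
      (((Finset.univ.erase i).erase j).card : ℝ) = ((n - 2 : ℕ) : ℝ) := by
    intro i j hj
    rw [Finset.card_erase_of_mem hj, Finset.card_erase_of_mem (Finset.mem_univ i)]
    rw [Finset.card_univ, Fintype.card_fin]
    have h12 : n - 1 - 1 = n - 2 := by omega
    rw [h12]
  calc (∑ i : Fin n, ∑ j ∈ Finset.univ.erase i, ∑ _k ∈ (Finset.univ.erase i).erase j, (1:ℝ))
      = ∑ i : Fin n, ∑ j ∈ Finset.univ.erase i, ((n - 2 : ℕ) : ℝ) := by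
        refine Finset.sum_congr rfl fun i _ => Finset.sum_congr rfl fun j hj => ?_
        rw [Finset.sum_const, nsmul_eq_mul, mul_one, hcard i j hj]
    _ = ∑ i : Fin n, ((n - 1 : ℕ) : ℝ) * ((n - 2 : ℕ) : ℝ) := by
        refine Finset.sum_congr rfl fun i _ => ?_
        rw [Finset.sum_const, nsmul_eq_mul, Finset.card_erase_of_mem (Finset.mem_univ i)]
        simp
    _ = (n : ℝ) * (((n - 1 : ℕ) : ℝ) * ((n - 2 : ℕ) : ℝ)) := by
        rw [Finset.sum_const, nsmul_eq_mul, Finset.card_univ, Fintype.card_fin]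
    _ = (n : ℝ) * ((n : ℝ) - 1) * ((n : ℝ) - 2) := by
        rcases le_or_gt 2 n with h | h
        · rw [Nat.cast_sub (by omega), Nat.cast_sub (by omega)]; push_cast; ring
        · interval_cases n <;> norm_num
noncomputable def Dp (x : Fin n → ℝ) (i j : Fin n) : ℝ :=
  ∏ q ∈ (PP n).erase (pr i j), dd q x

noncomputable def Dt (x : Fin n → ℝ) (i j k : Fin n) : ℝ :=
  ∏ r ∈ ((PP n).erase (pr i j)).erase (pr i k), dd r x

lemma filter_pr_univ (i : Fin n) :
    Finset.univ.filter (fun j => pr i j ∈ PP n) = Finset.univ.erase i := by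
  ext j
  simp only [Finset.mem_filter, Finset.mem_erase, Finset.mem_univ, and_true, true_and]
  constructor
  · intro h
    rintro rfl
    simp [pr, PP] at h
  · intro h; exact pr_mem (Ne.symm h)

lemma filter_pr_erase (i j : Fin n) (hj : j ≠ i) :
    Finset.univ.filter (fun k => pr i k ∈ (PP n).erase (pr i j))
      = (Finset.univ.erase i).erase j := by
  ext k
  simp only [Finset.mem_filter, Finset.mem_erase, Finset.mem_univ, and_true, true_and]
  constructor
  · rintro ⟨h1, h2⟩
    have hki : k ≠ i := by
      rintro rfl
      simp [pr, PP] at h2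
    exact ⟨fun hc => h1 (hc ▸ rfl), hki⟩
  · rintro ⟨h1, h2⟩
    exact ⟨fun hc => h1 (pr_inj h2 hj hc), pr_mem (Ne.symm h2)⟩

lemma pd_vd' (x : Fin n → ℝ) (i : Fin n) :
    pd i vd x = ∑ j ∈ Finset.univ.erase i, sg i j * Dp x i j := by
  rw [pd_vd, reindex i (PP n) (Finset.Subset.refl _), filter_pr_univ]
  rfl

lemma pd_pd_vd' (x : Fin n → ℝ) (i : Fin n) :
    pd i (pd i vd) x = ∑ j ∈ Finset.univ.erase i, sg i j *
      ∑ k ∈ (Finset.univ.erase i).erase j, sg i k * Dt x i j k := by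
  rw [pd_pd_vd, reindex i (PP n) (Finset.Subset.refl _)
    (g := fun p => ∑ q ∈ ((PP n).erase p), ee i q * ∏ r ∈ (((PP n).erase p).erase q), dd r x),
    filter_pr_univ]
  refine Finset.sum_congr rfl fun j hj => ?_
  have hj' : j ≠ i := (Finset.mem_erase.1 hj).1
  congr 1
  rw [reindex i ((PP n).erase (pr i j)) (Finset.erase_subset _ _)
    (g := fun p => ∏ r ∈ (((PP n).erase (pr i j)).erase p), dd r x),
    filter_pr_erase i j hj']
  rfl

lemma pair_id {i j : Fin n} (h : i ≠ j) (x : Fin n → ℝ) :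
    sg i j * (x i - x j) * Dp x i j = vd x := by
  rw [vd_eq, ← Finset.mul_prod_erase _ _ (pr_mem h), dd_pr h, Dp]

lemma Dp_symm (x : Fin n → ℝ) (i j : Fin n) : Dp x j i = Dp x i j := by
  rw [Dp, Dp, pr_symm]

lemma erase3_perm (s : Finset (Fin n × Fin n)) (a b c : Fin n × Fin n) :
    ((s.erase a).erase b).erase c = ((s.erase b).erase c).erase a := by
  ext x; simp only [Finset.mem_erase]; tauto

lemma triple_id {i j k : Fin n} (hij : i ≠ j) (hik : i ≠ k) (hjk : j ≠ k) (x : Fin n → ℝ) :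
    2 * x i * (1 - x i) * (sg i j * (sg i k * Dt x i j k))
      + 2 * x j * (1 - x j) * (sg j k * (sg j i * Dt x j k i))
      + 2 * x k * (1 - x k) * (sg k i * (sg k j * Dt x k i j))
      = -2 * vd x := by
  set p1 := pr i j with hp1def
  set p2 := pr i k with hp2def
  set p3 := pr j k with hp3def
  have hp1 : p1 ∈ PP n := pr_mem hij
  have hp2 : p2 ∈ PP n := pr_mem hik
  have hp3 : p3 ∈ PP n := pr_mem hjk
  have h12 : p1 ≠ p2 := fun h => hjk (pr_inj (Ne.symm hij) (Ne.symm hik) h)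
  have h13 : p1 ≠ p3 := by
    rw [hp1def, pr_symm]
    exact fun h => hik (pr_inj hij (Ne.symm hjk) h)
  have h23 : p2 ≠ p3 := by
    rw [hp2def, hp3def, pr_symm i k, pr_symm j k]
    exact fun h => hij (pr_inj hik hjk h)
  set M := ∏ r ∈ (((PP n).erase p1).erase p2).erase p3, dd r x with hM
  have m3 : p3 ∈ ((PP n).erase p1).erase p2 :=
    Finset.mem_erase.2 ⟨Ne.symm h23, Finset.mem_erase.2 ⟨Ne.symm h13, hp3⟩⟩
  have m2 : p2 ∈ ((PP n).erase p3).erase p1 :=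
    Finset.mem_erase.2 ⟨Ne.symm h12, Finset.mem_erase.2 ⟨h23, hp2⟩⟩
  have m1 : p1 ∈ ((PP n).erase p2).erase p3 :=
    Finset.mem_erase.2 ⟨h13, Finset.mem_erase.2 ⟨h12, hp1⟩⟩
  have eq1 : Dt x i j k = dd p3 x * M := by
    rw [Dt, ← Finset.mul_prod_erase _ _ m3]
  have eq2 : Dt x j k i = dd p2 x * M := by
    rw [Dt, ← hp3def, show pr j i = p1 from (pr_symm j i).trans hp1def.symm,
      ← Finset.mul_prod_erase _ _ m2, hM, erase3_perm (PP n) p3 p1 p2]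
  have eq3 : Dt x k i j = dd p1 x * M := by
    rw [Dt, show pr k i = p2 from (pr_symm k i).trans hp2def.symm,
      show pr k j = p3 from (pr_symm k j).trans hp3def.symm,
      ← Finset.mul_prod_erase _ _ m1, hM, erase3_perm (PP n) p2 p3 p1,
      erase3_perm (PP n) p3 p1 p2]
  have m2' : p2 ∈ (PP n).erase p1 := Finset.mem_erase.2 ⟨Ne.symm h12, hp2⟩
  have vdeq : vd x = dd p1 x * (dd p2 x * (dd p3 x * M)) := by
    rw [vd_eq, ← Finset.mul_prod_erase _ _ hp1, ← Finset.mul_prod_erase _ _ m2',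
      ← Finset.mul_prod_erase _ _ m3]
  have d1 : dd p1 x = sg i j * (x i - x j) := by rw [hp1def]; exact dd_pr hij x
  have d2 : dd p2 x = sg i k * (x i - x k) := by rw [hp2def]; exact dd_pr hik x
  have d3 : dd p3 x = sg j k * (x j - x k) := by rw [hp3def]; exact dd_pr hjk x
  rw [eq1, eq2, eq3, vdeq, d1, d2, d3, sg_symm hij, sg_symm hik, sg_symm hjk]
  ring
lemma drift (A B : ℝ) (x : Fin n → ℝ) :
    ∑ i, 2 * (A - B * x i) * pd i vd x = -B * ((n : ℝ) * ((n : ℝ) - 1)) * vd x := by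
  have step : ∑ i, 2 * (A - B * x i) * pd i vd x
      = ∑ p ∈ E2 n, 2 * (A - B * x p.1) * (sg p.1 p.2 * Dp x p.1 p.2) := by
    rw [nested2 (fun i j => 2 * (A - B * x i) * (sg i j * Dp x i j))]
    refine Finset.sum_congr rfl fun i _ => ?_
    rw [pd_vd', Finset.mul_sum]
  have hsw := swap2 (n := n) (fun p => 2 * (A - B * x p.1) * (sg p.1 p.2 * Dp x p.1 p.2))
  have key : ∀ p ∈ E2 n,
      (2 * (A - B * x p.1) * (sg p.1 p.2 * Dp x p.1 p.2)
        + 2 * (A - B * x p.swap.1) * (sg p.swap.1 p.swap.2 * Dp x p.swap.1 p.swap.2))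
      = -2 * B * vd x := by
    rintro ⟨i, j⟩ hp
    have hne : i ≠ j := by simpa [E2] using hp
    simp only [Prod.swap_prod_mk]
    rw [sg_symm hne, Dp_symm x i j]
    linear_combination (-2 * B) * pair_id hne x
  have h2S : (∑ p ∈ E2 n, 2 * (A - B * x p.1) * (sg p.1 p.2 * Dp x p.1 p.2))
      + (∑ p ∈ E2 n, 2 * (A - B * x p.1) * (sg p.1 p.2 * Dp x p.1 p.2))
      = ((E2 n).card : ℝ) * (-2 * B * vd x) := by
    nth_rewrite 2 [hsw]
    rw [← Finset.sum_add_distrib]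
    calc ∑ p ∈ E2 n, (2 * (A - B * x p.1) * (sg p.1 p.2 * Dp x p.1 p.2)
          + 2 * (A - B * x p.swap.1) * (sg p.swap.1 p.swap.2 * Dp x p.swap.1 p.swap.2))
        = ∑ _p ∈ E2 n, (-2 * B * vd x) := Finset.sum_congr rfl key
      _ = ((E2 n).card : ℝ) * (-2 * B * vd x) := by rw [Finset.sum_const, nsmul_eq_mul]
  rw [step]
  have := h2S
  rw [card_E2] at this
  linarith

lemma diffusion (x : Fin n → ℝ) :
    ∑ i, 2 * x i * (1 - x i) * pd i (pd i vd) x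
      = -(2 / 3) * ((n : ℝ) * ((n : ℝ) - 1) * ((n : ℝ) - 2)) * vd x := by
  set G : Fin n × Fin n × Fin n → ℝ :=
    fun t => 2 * x t.1 * (1 - x t.1) *
      (sg t.1 t.2.1 * (sg t.1 t.2.2 * Dt x t.1 t.2.1 t.2.2)) with hG
  have step : ∑ i, 2 * x i * (1 - x i) * pd i (pd i vd) x = ∑ t ∈ E3 n, G t := by
    rw [nested3 (fun i j k => 2 * x i * (1 - x i) * (sg i j * (sg i k * Dt x i j k)))]
    refine Finset.sum_congr rfl fun i _ => ?_
    rw [pd_pd_vd', Finset.mul_sum]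
    refine Finset.sum_congr rfl fun j _ => ?_
    rw [Finset.mul_sum, Finset.mul_sum]
  have hrot1 := sum_rot3 (n := n) G
  have hrot2 := sum_rot3 (n := n) (fun t => G (rot3 t))
  have key : ∀ t ∈ E3 n, G t + G (rot3 t) + G (rot3 (rot3 t)) = -2 * vd x := by
    rintro ⟨i, j, k⟩ ht
    have h := by simpa [E3] using ht
    obtain ⟨hij, hik, hjk⟩ : i ≠ j ∧ i ≠ k ∧ j ≠ k := h
    exact triple_id hij hik hjk x
  have e1 : ∑ t ∈ E3 n, G (rot3 t) = ∑ t ∈ E3 n, G t := hrot1.symm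
  have e2 : ∑ t ∈ E3 n, G (rot3 (rot3 t)) = ∑ t ∈ E3 n, G t := (hrot1.trans hrot2).symm
  have h3S : (∑ t ∈ E3 n, G t) + (∑ t ∈ E3 n, G t) + (∑ t ∈ E3 n, G t)
      = ((E3 n).card : ℝ) * (-2 * vd x) := by
    calc (∑ t ∈ E3 n, G t) + (∑ t ∈ E3 n, G t) + (∑ t ∈ E3 n, G t)
        = (∑ t ∈ E3 n, G t) + (∑ t ∈ E3 n, G (rot3 t))
            + (∑ t ∈ E3 n, G (rot3 (rot3 t))) := by rw [e1, e2]
      _ = ∑ t ∈ E3 n, (G t + G (rot3 t) + G (rot3 (rot3 t))) := by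
            rw [← Finset.sum_add_distrib, ← Finset.sum_add_distrib]
      _ = ∑ _t ∈ E3 n, (-2 * vd x) := Finset.sum_congr rfl key
      _ = ((E3 n).card : ℝ) * (-2 * vd x) := by rw [Finset.sum_const, nsmul_eq_mul]
  rw [step]
  have := h3S
  rw [card_E3] at this
  linarith

theorem jacobi_eigenfunction_vandermonde (n : ℕ) (p q : ℤ) (hn : 1 ≤ n)
    (hp : (n : ℤ) ≤ p) (hq : (n : ℤ) ≤ q)
    (x : Fin n → ℝ) (hx : ∀ i, x i ∈ Set.Ioo (0:ℝ) 1) :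
    ∑ i : Fin n, (2 * x i * (1 - x i) * pd i (pd i vd) x
        + 2 * (((p:ℝ) - n + 1) - ((p:ℝ) + q - 2 * n + 2) * x i) * pd i vd x)
      = -((n:ℝ) * ((n:ℝ) - 1) * (3 * (p:ℝ) + 3 * (q:ℝ) - 4 * (n:ℝ) + 2) / 3) * vd x := by
  rw [Finset.sum_add_distrib, diffusion x, drift ((p:ℝ) - n + 1) ((p:ℝ) + q - 2 * n + 2) x]
  ring
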